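/- Let Φ ∈ C_c(ℝ²) be a probability density supported in the ball of radius 1, and suppose Ψ : ℝ² × [0,T₀] → ℝ satisfies sup_{0 ≤ t ≤ T₀} |Ψ(y,t)| ≤ C₀/(1 + |y|^p) for some p ∈ (0,∞) and constant C₀. Then there is a constant C (depending on C₀, T₀, p, Φ) such that for all T ∈ (0,T₀], η ∈ (0,1/2) and x₀ ∈ ℝ²: |(2π / log η^{−1}) ∫₀^T ∫_{ℝ²} [P_t Φ_η(y)]² Ψ(x₀ − y, t) dy dt| ≤ C / (1 + |x₀|^p). -/

import Mathlib

open MeasureTheory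
set_option maxHeartbeats 2000000

/-- The two-dimensional heat kernel `P_t(x) = (2πt)⁻¹ exp(−‖x‖²/(2t))`. -/
noncomputable def heatK (t : ℝ) (x : EuclideanSpace ℝ (Fin 2)) : ℝ :=
  (2 * Real.pi * t)⁻¹ * Real.exp (-‖x‖ ^ 2 / (2 * t))

namespace Stmt14

open Real Convolution

abbrev E2 := EuclideanSpace ℝ (Fin 2)

lemma integrable_gauss {b : ℝ} (hb : 0 < b) :
    Integrable (fun v : E2 => Real.exp (-(b * ‖v‖ ^ 2))) := by
  have h := (GaussianFourier.integrable_cexp_neg_mul_sq_norm_add (V := E2) (b := (b:ℂ))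
    (by simpa using hb) 0 0).norm
  refine h.congr (Filter.Eventually.of_forall fun v => ?_)
  simp [Complex.norm_exp, ← Complex.ofReal_pow]

lemma integral_gauss {b : ℝ} (hb : 0 < b) :
    (∫ v : E2, Real.exp (-(b * ‖v‖ ^ 2))) = π / b := by
  have h := GaussianFourier.integral_rexp_neg_mul_sq_norm (V := E2) hb
  simp only [neg_mul] at h ⊢
  rw [h]; simp [finrank_euclideanSpace_fin]

lemma heatK_eq {t : ℝ} (x : E2) :
    heatK t x = (2 * π * t)⁻¹ * Real.exp (-((2*t)⁻¹ * ‖x‖ ^ 2)) := by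
  rw [heatK]; ring_nf

lemma heatK_nonneg {t : ℝ} (ht : 0 < t) (x : E2) : 0 ≤ heatK t x := by
  rw [heatK]; positivity

lemma heatK_le {t : ℝ} (ht : 0 < t) (x : E2) : heatK t x ≤ (2 * π * t)⁻¹ := by
  rw [heatK]
  have h1 : Real.exp (-‖x‖ ^ 2 / (2 * t)) ≤ 1 := by
    rw [Real.exp_le_one_iff]
    have : (0:ℝ) ≤ ‖x‖^2 := by positivity
    rw [div_nonpos_iff]; right; constructor <;> nlinarith
  nlinarith [Real.exp_pos (-‖x‖ ^ 2 / (2 * t)), inv_pos.2 (by positivity : (0:ℝ) < 2*π*t)]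

lemma integrable_heatK {t : ℝ} (ht : 0 < t) : Integrable (heatK t) := by
  have := (integrable_gauss (b := (2*t)⁻¹) (by positivity)).const_mul ((2 * π * t)⁻¹)
  exact this.congr (Filter.Eventually.of_forall fun v => (heatK_eq v).symm)

lemma integral_heatK {t : ℝ} (ht : 0 < t) : (∫ x, heatK t x) = 1 := by
  have h : (∫ x : E2, heatK t x) = (2 * π * t)⁻¹ * ∫ x : E2, Real.exp (-((2*t)⁻¹ * ‖x‖ ^ 2)) := by
    rw [← MeasureTheory.integral_const_mul]
    exact integral_congr_ae (Filter.Eventually.of_forall fun v => heatK_eq v)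
  rw [h, integral_gauss (by positivity)]
  have hπ := Real.pi_pos
  field_simp


lemma phieta_supp (Φ : E2 → ℝ) (hΦsupp : ∀ z : E2, 1 < ‖z‖ → Φ z = 0) {η : ℝ} (hη : 0 < η) :
    ∀ z : E2, η < ‖z‖ → (η ^ 2)⁻¹ * Φ (η⁻¹ • z) = 0 := by
  intro z hz
  rw [hΦsupp _ ?_, mul_zero]
  rw [norm_smul]
  simp only [norm_inv, Real.norm_eq_abs, abs_of_pos hη]
  have : 1 * η < η⁻¹ * ‖z‖ * η := by
    rw [one_mul, mul_assoc, mul_comm ‖z‖ η, ← mul_assoc, inv_mul_cancel₀ hη.ne', one_mul]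
    exact hz
  exact lt_of_mul_lt_mul_right this hη.le

lemma phieta_hcs (Φ : E2 → ℝ) (hΦsupp : ∀ z : E2, 1 < ‖z‖ → Φ z = 0) {η : ℝ} (hη : 0 < η) :
    HasCompactSupport (fun z : E2 => (η ^ 2)⁻¹ * Φ (η⁻¹ • z)) := by
  apply HasCompactSupport.intro (isCompact_closedBall (0:E2) η)
  intro z hz
  simp only [Metric.mem_closedBall, dist_zero_right, not_le] at hz
  exact phieta_supp Φ hΦsupp hη z hz

lemma phieta_cont (Φ : E2 → ℝ) (hΦc : Continuous Φ) {η : ℝ} :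
    Continuous (fun z : E2 => (η ^ 2)⁻¹ * Φ (η⁻¹ • z)) :=
  continuous_const.mul (hΦc.comp (continuous_const_smul _))

lemma phieta_integrable (Φ : E2 → ℝ) (hΦc : Continuous Φ)
    (hΦsupp : ∀ z : E2, 1 < ‖z‖ → Φ z = 0) {η : ℝ} (hη : 0 < η) :
    Integrable (fun z : E2 => (η ^ 2)⁻¹ * Φ (η⁻¹ • z)) :=
  (phieta_cont Φ hΦc).integrable_of_hasCompactSupport (phieta_hcs Φ hΦsupp hη)

lemma phieta_integral (Φ : E2 → ℝ) (hΦ1 : (∫ z, Φ z) = 1) {η : ℝ} (hη : 0 < η) :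
    (∫ z : E2, (η ^ 2)⁻¹ * Φ (η⁻¹ • z)) = 1 := by
  rw [MeasureTheory.integral_const_mul]
  rw [MeasureTheory.Measure.integral_comp_smul (μ := volume) (fun z => Φ z) η⁻¹]
  rw [hΦ1, finrank_euclideanSpace_fin, smul_eq_mul, mul_one,
    abs_of_pos (by positivity : (0:ℝ) < ((η⁻¹)^2)⁻¹)]
  field_simp

lemma phieta_bound (Φ : E2 → ℝ) (M : ℝ) (hM : ∀ z, Φ z ≤ M) {η : ℝ} (hη : 0 < η) (z : E2) :
    (η ^ 2)⁻¹ * Φ (η⁻¹ • z) ≤ M * (η ^ 2)⁻¹ := by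
  have := hM (η⁻¹ • z)
  have h2 : (0:ℝ) < (η^2)⁻¹ := by positivity
  nlinarith

section FBounds

variable {t : ℝ} (ht : 0 < t) {g : E2 → ℝ} (hg : Integrable g) (hg0 : ∀ z, 0 ≤ g z)
include ht hg hg0

omit hg in
lemma f_nonneg (y : E2) : 0 ≤ ∫ z, heatK t (y - z) * g z :=
  integral_nonneg fun z => mul_nonneg (heatK_nonneg ht _) (hg0 z)

lemma f_le_one (hgint : (∫ z, g z) = 1) (y : E2) :
    (∫ z, heatK t (y - z) * g z) ≤ (2 * π * t)⁻¹ := by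
  have h := integral_mono_of_nonneg
    (f := fun z => heatK t (y - z) * g z) (g := fun z => (2 * π * t)⁻¹ * g z)
    (Filter.Eventually.of_forall fun z => mul_nonneg (heatK_nonneg ht _) (hg0 z))
    (hg.const_mul _)
    (Filter.Eventually.of_forall fun z =>
      mul_le_mul_of_nonneg_right (heatK_le ht _) (hg0 z))
  rwa [MeasureTheory.integral_const_mul, hgint, mul_one] at h

omit hg in
lemma f_le_A {A : ℝ} (hgA : ∀ z, g z ≤ A) (y : E2) :
    (∫ z, heatK t (y - z) * g z) ≤ A := by
  have h := integral_mono_of_nonneg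
    (f := fun z => heatK t (y - z) * g z) (g := fun z => heatK t (y - z) * A)
    (Filter.Eventually.of_forall fun z => mul_nonneg (heatK_nonneg ht _) (hg0 z))
    (((integrable_heatK ht).comp_sub_left y).mul_const _)
    (Filter.Eventually.of_forall fun z =>
      mul_le_mul_of_nonneg_left (hgA z) (heatK_nonneg ht _))
  rwa [MeasureTheory.integral_mul_const, integral_sub_left_eq_self (heatK t) volume y,
    integral_heatK ht, one_mul] at h

lemma f_tail (hgsupp : ∀ z : E2, 1 < ‖z‖ → g z = 0) (hgint : (∫ z, g z) = 1)
    {y : E2} (hy : 2 ≤ ‖y‖) :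
    (∫ z, heatK t (y - z) * g z) ≤ (2 * π * t)⁻¹ * Real.exp (-‖y‖ ^ 2 / (8 * t)) := by
  have key : ∀ z : E2, heatK t (y - z) * g z ≤
      ((2 * π * t)⁻¹ * Real.exp (-‖y‖ ^ 2 / (8 * t))) * g z := by
    intro z
    by_cases hz : 1 < ‖z‖
    · rw [hgsupp z hz, mul_zero, mul_zero]
    push_neg at hz
    refine mul_le_mul_of_nonneg_right ?_ (hg0 z)
    rw [heatK]
    refine mul_le_mul_of_nonneg_left ?_ (by positivity)
    refine Real.exp_le_exp.2 ?_
    rw [div_le_div_iff₀ (by linarith) (by linarith)]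
    have h1 : ‖y‖ - 1 ≤ ‖y - z‖ := by
      have := norm_sub_norm_le y z
      linarith
    have h3 : ‖y‖^2 / 4 ≤ ‖y - z‖^2 := by nlinarith [norm_nonneg (y - z)]
    nlinarith [mul_le_mul_of_nonneg_right h3 ht.le]
  have h := integral_mono_of_nonneg
    (f := fun z => heatK t (y - z) * g z)
    (g := fun z => ((2 * π * t)⁻¹ * Real.exp (-‖y‖ ^ 2 / (8 * t))) * g z)
    (Filter.Eventually.of_forall fun z => mul_nonneg (heatK_nonneg ht _) (hg0 z))
    (hg.const_mul _) (Filter.Eventually.of_forall key)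
  rwa [MeasureTheory.integral_const_mul, hgint, mul_one] at h

omit hg0 in
lemma f_integrable : Integrable (fun y => ∫ z, heatK t (y - z) * g z) := by
  have he : (fun y => ∫ z, heatK t (y - z) * g z)
      = (g ⋆[ContinuousLinearMap.mul ℝ ℝ] heatK t) := by
    funext y
    rw [convolution_def]
    simp only [ContinuousLinearMap.mul_apply']
    exact integral_congr_ae (Filter.Eventually.of_forall fun z => mul_comm _ _)
  rw [he]
  exact hg.integrable_convolution _ (integrable_heatK ht)

omit hg0 in
lemma f_integral (hgint : (∫ z, g z) = 1) :
    (∫ y, ∫ z, heatK t (y - z) * g z) = 1 := by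
  have he : (fun y => ∫ z, heatK t (y - z) * g z)
      = (g ⋆[ContinuousLinearMap.mul ℝ ℝ] heatK t) := by
    funext y
    rw [convolution_def]
    simp only [ContinuousLinearMap.mul_apply']
    exact integral_congr_ae (Filter.Eventually.of_forall fun z => mul_comm _ _)
  calc (∫ y, ∫ z, heatK t (y - z) * g z)
      = ∫ y, (g ⋆[ContinuousLinearMap.mul ℝ ℝ] heatK t) y := by rw [he]
    _ = 1 := by
        rw [integral_convolution (L := ContinuousLinearMap.mul ℝ ℝ) hg (integrable_heatK ht)]
        simp [hgint, integral_heatK ht]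

end FBounds

lemma weight_bound {p : ℝ} (hp : 0 < p) {a b c : ℝ} (ha : 0 ≤ a) (hb : 0 ≤ b) (hc : 0 ≤ c)
    (habc : a ≤ b + c) : 1 + a ^ p ≤ 2 ^ p * (1 + b ^ p) * (1 + c ^ p) := by
  have h2p : (1:ℝ) ≤ 2 ^ p := Real.one_le_rpow (by norm_num) hp.le
  have hbp : (0:ℝ) ≤ b ^ p := Real.rpow_nonneg hb p
  have hcp : (0:ℝ) ≤ c ^ p := Real.rpow_nonneg hc p
  have hap : a ^ p ≤ 2 ^ p * (b ^ p + c ^ p) := by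
    have h1 : a ^ p ≤ (b + c) ^ p := Real.rpow_le_rpow ha habc hp.le
    have h2 : b + c ≤ 2 * max b c := by
      rcases le_total b c with h | h
      · simp [max_eq_right h]; linarith
      · simp [max_eq_left h]; linarith
    have h3 : (b + c) ^ p ≤ (2 * max b c) ^ p :=
      Real.rpow_le_rpow (by linarith) h2 hp.le
    have h4 : (2 * max b c) ^ p = 2 ^ p * (max b c) ^ p :=
      Real.mul_rpow (by norm_num) (le_max_iff.2 (Or.inl hb))
    have h5 : (max b c) ^ p ≤ b ^ p + c ^ p := by
      rcases le_total b c with h | h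
      · rw [max_eq_right h]; linarith
      · rw [max_eq_left h]; linarith
    calc a ^ p ≤ (2 * max b c) ^ p := le_trans h1 h3
      _ = 2 ^ p * (max b c) ^ p := h4
      _ ≤ 2 ^ p * (b ^ p + c ^ p) := by nlinarith
  nlinarith [mul_nonneg hbp hcp, mul_nonneg (mul_nonneg (le_trans zero_le_one h2p) hbp) hcp]

lemma K_bound {p T₀ t r : ℝ} (hp : 0 < p) (hT₀ : 0 < T₀) (ht : 0 < t) (htT : t ≤ T₀)
    (hr : 2 ≤ r) :
    (1 + r ^ p) * Real.exp (-((16 * t)⁻¹ * r ^ 2)) ≤ 1 + Real.exp (4 * T₀ * p ^ 2) := by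
  have hr0 : (0:ℝ) < r := by linarith
  have h1 : Real.exp (-((16 * t)⁻¹ * r ^ 2)) ≤ Real.exp (-((16 * T₀)⁻¹ * r ^ 2)) := by
    refine Real.exp_le_exp.2 ?_
    have : (16 * T₀)⁻¹ ≤ (16 * t)⁻¹ := by
      apply inv_anti₀ (by linarith) (by linarith)
    nlinarith [sq_nonneg r]
  have hrp : r ^ p ≤ Real.exp (p * r) := by
    rw [Real.rpow_def_of_pos hr0]
    refine Real.exp_le_exp.2 ?_
    have := Real.log_le_sub_one_of_pos hr0
    nlinarith
  have h2 : p * r - (16 * T₀)⁻¹ * r ^ 2 ≤ 4 * T₀ * p ^ 2 := by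
    have h16 : (0:ℝ) < 16 * T₀ := by linarith
    have key : (16 * T₀) * (p * r - 4 * T₀ * p ^ 2) ≤ r ^ 2 := by
      nlinarith [sq_nonneg (r - 8 * T₀ * p)]
    have : p * r - 4 * T₀ * p ^ 2 ≤ (16 * T₀)⁻¹ * r ^ 2 := by
      rw [← le_div_iff₀' h16] at key
      rwa [div_eq_inv_mul] at key
    linarith
  have h3 : r ^ p * Real.exp (-((16 * T₀)⁻¹ * r ^ 2)) ≤ Real.exp (4 * T₀ * p ^ 2) := by
    calc r ^ p * Real.exp (-((16 * T₀)⁻¹ * r ^ 2))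
        ≤ Real.exp (p * r) * Real.exp (-((16 * T₀)⁻¹ * r ^ 2)) := by
          exact mul_le_mul_of_nonneg_right hrp (Real.exp_nonneg _)
      _ = Real.exp (p * r - (16 * T₀)⁻¹ * r ^ 2) := by rw [← Real.exp_add]; ring_nf
      _ ≤ Real.exp (4 * T₀ * p ^ 2) := Real.exp_le_exp.2 h2
  have he1 : Real.exp (-((16 * T₀)⁻¹ * r ^ 2)) ≤ 1 := by
    rw [Real.exp_le_one_iff]
    have : (0:ℝ) < (16 * T₀)⁻¹ := by positivity
    nlinarith [sq_nonneg r]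
  have hrp0 : (0:ℝ) ≤ r ^ p := Real.rpow_nonneg hr0.le p
  calc (1 + r ^ p) * Real.exp (-((16 * t)⁻¹ * r ^ 2))
      ≤ (1 + r ^ p) * Real.exp (-((16 * T₀)⁻¹ * r ^ 2)) := by
        nlinarith [Real.exp_nonneg (-((16 * t)⁻¹ * r ^ 2))]
    _ = Real.exp (-((16 * T₀)⁻¹ * r ^ 2)) + r ^ p * Real.exp (-((16 * T₀)⁻¹ * r ^ 2)) := by ring
    _ ≤ 1 + Real.exp (4 * T₀ * p ^ 2) := by linarith


lemma inner_bound {p B T₀ t A : ℝ} (hp : 0 < p) (hB : 0 ≤ B) (hT₀ : 0 < T₀)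
    (ht : 0 < t) (htT : t ≤ T₀)
    {g : E2 → ℝ} (hg : Integrable g) (hg0 : ∀ z, 0 ≤ g z)
    (hgsupp : ∀ z : E2, 1 < ‖z‖ → g z = 0) (hgint : (∫ z, g z) = 1)
    (hgA : ∀ z, g z ≤ A)
    (Ψ : E2 × ℝ → ℝ) (hΨ : ∀ y : E2, |Ψ (y, t)| ≤ B / (1 + ‖y‖ ^ p)) (x₀ : E2) :
    |∫ y : E2, (∫ z, heatK t (y - z) * g z) ^ 2 * Ψ (x₀ - y, t)| ≤
      B * 2 ^ p * ((1 + 2 ^ p) + 8 * (1 + Real.exp (4 * T₀ * p ^ 2))) *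
        min ((2 * π * t)⁻¹) A / (1 + ‖x₀‖ ^ p) := by
  set f : E2 → ℝ := fun y => ∫ z, heatK t (y - z) * g z with hfdef
  set K : ℝ := 1 + Real.exp (4 * T₀ * p ^ 2) with hKdef
  set m : ℝ := min ((2 * π * t)⁻¹) A with hmdef
  have hA0 : 0 ≤ A := le_trans (hg0 0) (hgA 0)
  have hπ := Real.pi_pos
  have h2πt : (0:ℝ) < 2 * π * t := mul_pos (by positivity) ht
  have h16t : (0:ℝ) < (16 * t)⁻¹ := inv_pos.2 (by linarith)
  have hm0 : 0 ≤ m := le_min (inv_nonneg.2 h2πt.le) hA0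
  have hf0 : ∀ y, 0 ≤ f y := f_nonneg ht hg0
  have hfm : ∀ y, f y ≤ m := fun y =>
    le_min (f_le_one ht hg hg0 hgint y) (f_le_A ht hg0 hgA y)
  have hK0 : (0:ℝ) ≤ K := by rw [hKdef]; positivity
  have hRp : (0:ℝ) ≤ ‖x₀‖ ^ p := Real.rpow_nonneg (norm_nonneg x₀) p
  have hden : (0:ℝ) < 1 + ‖x₀‖ ^ p := by linarith
  have h2p : (0:ℝ) < 2 ^ p := Real.rpow_pos_of_pos (by norm_num) p
  have hcoeff : (0:ℝ) ≤ B * 2 ^ p / (1 + ‖x₀‖ ^ p) * m := by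
    have h2p' : (0:ℝ) < 2 ^ p := Real.rpow_pos_of_pos (by norm_num) p
    have hRp' : (0:ℝ) ≤ ‖x₀‖ ^ p := Real.rpow_nonneg (norm_nonneg x₀) p
    exact mul_nonneg (div_nonneg (mul_nonneg hB h2p'.le) (by linarith)) hm0
  have hpt : ∀ y : E2, |f y ^ 2 * Ψ (x₀ - y, t)| ≤
      B * 2 ^ p / (1 + ‖x₀‖ ^ p) * m *
        ((1 + 2 ^ p) * f y + K * ((2 * π * t)⁻¹ * Real.exp (-((16 * t)⁻¹ * ‖y‖ ^ 2)))) := by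
    intro y
    have hyp0 : (0:ℝ) ≤ ‖y‖ ^ p := Real.rpow_nonneg (norm_nonneg y) p
    have hstep1 : |f y ^ 2 * Ψ (x₀ - y, t)| = f y ^ 2 * |Ψ (x₀ - y, t)| := by
      rw [abs_mul, abs_of_nonneg (sq_nonneg _)]
    have hdp : (0:ℝ) < 1 + ‖x₀ - y‖ ^ p := by
      have := Real.rpow_nonneg (norm_nonneg (x₀ - y)) p; linarith
    have hΨb : |Ψ (x₀ - y, t)| ≤ B * 2 ^ p * (1 + ‖y‖ ^ p) / (1 + ‖x₀‖ ^ p) := by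
      refine le_trans (hΨ (x₀ - y)) ?_
      rw [div_le_div_iff₀ hdp hden]
      have hw := weight_bound hp (norm_nonneg x₀) (norm_nonneg (x₀ - y)) (norm_nonneg y)
        (by calc ‖x₀‖ = ‖(x₀ - y) + y‖ := by rw [sub_add_cancel]
              _ ≤ ‖x₀ - y‖ + ‖y‖ := norm_add_le _ _)
      calc B * (1 + ‖x₀‖ ^ p) ≤ B * (2 ^ p * (1 + ‖x₀ - y‖ ^ p) * (1 + ‖y‖ ^ p)) :=
            mul_le_mul_of_nonneg_left hw hB
        _ = B * 2 ^ p * (1 + ‖y‖ ^ p) * (1 + ‖x₀ - y‖ ^ p) := by ring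
    have hsq : f y ^ 2 ≤ f y * m := by
      have := mul_le_mul_of_nonneg_left (hfm y) (hf0 y)
      nlinarith
    have hmain : f y ^ 2 * |Ψ (x₀ - y, t)| ≤
        B * 2 ^ p / (1 + ‖x₀‖ ^ p) * m * (f y * (1 + ‖y‖ ^ p)) := by
      calc f y ^ 2 * |Ψ (x₀ - y, t)|
          ≤ f y ^ 2 * (B * 2 ^ p * (1 + ‖y‖ ^ p) / (1 + ‖x₀‖ ^ p)) :=
            mul_le_mul_of_nonneg_left hΨb (sq_nonneg _)
        _ ≤ (f y * m) * (B * 2 ^ p * (1 + ‖y‖ ^ p) / (1 + ‖x₀‖ ^ p)) := by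
            exact mul_le_mul_of_nonneg_right hsq
              (div_nonneg (mul_nonneg (mul_nonneg hB h2p.le) (by linarith)) hden.le)
        _ = B * 2 ^ p / (1 + ‖x₀‖ ^ p) * m * (f y * (1 + ‖y‖ ^ p)) := by ring
    have hsplit : f y * (1 + ‖y‖ ^ p) ≤
        (1 + 2 ^ p) * f y + K * ((2 * π * t)⁻¹ * Real.exp (-((16 * t)⁻¹ * ‖y‖ ^ 2))) := by
      by_cases hy : ‖y‖ ≤ 2
      · have h1 : ‖y‖ ^ p ≤ 2 ^ p := Real.rpow_le_rpow (norm_nonneg y) hy hp.le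
        have h2 : (0:ℝ) ≤ K * ((2 * π * t)⁻¹ * Real.exp (-((16 * t)⁻¹ * ‖y‖ ^ 2))) :=
          mul_nonneg hK0 (mul_nonneg (inv_nonneg.2 h2πt.le) (Real.exp_nonneg _))
        nlinarith [hf0 y]
      · push_neg at hy
        have htail := f_tail ht hg hg0 hgsupp hgint (le_of_lt hy)
        have hexp : Real.exp (-‖y‖ ^ 2 / (8 * t)) =
            Real.exp (-((16 * t)⁻¹ * ‖y‖ ^ 2)) * Real.exp (-((16 * t)⁻¹ * ‖y‖ ^ 2)) := by
          rw [← Real.exp_add]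
          congr 1
          field_simp
          ring
        have hKb := K_bound hp hT₀ ht htT (le_of_lt hy)
        have h1 : (0:ℝ) ≤ (1 + 2 ^ p) * f y := mul_nonneg (by positivity) (hf0 y)
        calc f y * (1 + ‖y‖ ^ p)
            ≤ ((2 * π * t)⁻¹ * Real.exp (-‖y‖ ^ 2 / (8 * t))) * (1 + ‖y‖ ^ p) := by
              refine mul_le_mul_of_nonneg_right htail ?_
              linarith
          _ = ((2 * π * t)⁻¹ * Real.exp (-((16 * t)⁻¹ * ‖y‖ ^ 2))) *
              ((1 + ‖y‖ ^ p) * Real.exp (-((16 * t)⁻¹ * ‖y‖ ^ 2))) := by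
              rw [hexp]; ring
          _ ≤ ((2 * π * t)⁻¹ * Real.exp (-((16 * t)⁻¹ * ‖y‖ ^ 2))) * K := by
              exact mul_le_mul_of_nonneg_left hKb
                (mul_nonneg (inv_nonneg.2 h2πt.le) (Real.exp_nonneg _))
          _ = K * ((2 * π * t)⁻¹ * Real.exp (-((16 * t)⁻¹ * ‖y‖ ^ 2))) := by ring
          _ ≤ (1 + 2 ^ p) * f y +
              K * ((2 * π * t)⁻¹ * Real.exp (-((16 * t)⁻¹ * ‖y‖ ^ 2))) := by linarith
    calc |f y ^ 2 * Ψ (x₀ - y, t)| = f y ^ 2 * |Ψ (x₀ - y, t)| := hstep1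
      _ ≤ B * 2 ^ p / (1 + ‖x₀‖ ^ p) * m * (f y * (1 + ‖y‖ ^ p)) := hmain
      _ ≤ B * 2 ^ p / (1 + ‖x₀‖ ^ p) * m *
          ((1 + 2 ^ p) * f y + K * ((2 * π * t)⁻¹ * Real.exp (-((16 * t)⁻¹ * ‖y‖ ^ 2)))) :=
          mul_le_mul_of_nonneg_left hsplit hcoeff
  have hgauss : Integrable (fun v : E2 => Real.exp (-((16 * t)⁻¹ * ‖v‖ ^ 2))) :=
    integrable_gauss h16t
  have hdom : Integrable (fun y : E2 => B * 2 ^ p / (1 + ‖x₀‖ ^ p) * m *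
      ((1 + 2 ^ p) * f y + K * ((2 * π * t)⁻¹ * Real.exp (-((16 * t)⁻¹ * ‖y‖ ^ 2))))) := by
    refine Integrable.const_mul ?_ _
    exact ((f_integrable ht hg).const_mul _).add
      (((hgauss.const_mul ((2 * π * t)⁻¹)).const_mul K))
  have habs : |∫ y : E2, f y ^ 2 * Ψ (x₀ - y, t)| ≤
      ∫ y : E2, |f y ^ 2 * Ψ (x₀ - y, t)| := by
    exact norm_integral_le_integral_norm (μ := volume) (fun y : E2 => f y ^ 2 * Ψ (x₀ - y, t))
  have hmono := integral_mono_of_nonneg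
    (f := fun y : E2 => |f y ^ 2 * Ψ (x₀ - y, t)|)
    (Filter.Eventually.of_forall fun y => abs_nonneg _) hdom
    (Filter.Eventually.of_forall hpt)
  have hval : (∫ y : E2, B * 2 ^ p / (1 + ‖x₀‖ ^ p) * m *
      ((1 + 2 ^ p) * f y + K * ((2 * π * t)⁻¹ * Real.exp (-((16 * t)⁻¹ * ‖y‖ ^ 2))))) =
      B * 2 ^ p / (1 + ‖x₀‖ ^ p) * m * ((1 + 2 ^ p) + K * 8) := by
    rw [MeasureTheory.integral_const_mul]
    congr 1
    rw [integral_add ((f_integrable ht hg).const_mul _)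
      ((hgauss.const_mul ((2 * π * t)⁻¹)).const_mul K),
      MeasureTheory.integral_const_mul, MeasureTheory.integral_const_mul,
      MeasureTheory.integral_const_mul,
      f_integral ht hg hgint, integral_gauss h16t]
    have h8 : (2 * π * t)⁻¹ * (π / (16 * t)⁻¹) = 8 := by
      field_simp
      ring
    rw [h8, mul_one]
  calc |∫ y : E2, f y ^ 2 * Ψ (x₀ - y, t)|
      ≤ ∫ y : E2, |f y ^ 2 * Ψ (x₀ - y, t)| := habs
    _ ≤ B * 2 ^ p / (1 + ‖x₀‖ ^ p) * m * ((1 + 2 ^ p) + K * 8) := by rw [← hval]; exact hmono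
    _ = B * 2 ^ p * ((1 + 2 ^ p) + 8 * K) * m / (1 + ‖x₀‖ ^ p) := by ring


lemma minf_integrable {η T M : ℝ} (hη : 0 < η) (hT : 0 < T) (hM : 0 ≤ M) :
    IntegrableOn (fun t : ℝ => min ((2 * π * t)⁻¹) (M * (η ^ 2)⁻¹)) (Set.Ioo 0 T) := by
  have hπ := Real.pi_pos
  have hmeas : Measurable (fun t : ℝ => min ((2 * π * t)⁻¹) (M * (η ^ 2)⁻¹)) :=
    ((measurable_id.const_mul (2 * π)).inv).min measurable_const
  have hMη : (0:ℝ) ≤ M * (η ^ 2)⁻¹ := by positivity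
  refine Integrable.mono'
    (g := fun _ : ℝ => M * (η ^ 2)⁻¹)
    (integrableOn_const measure_Ioo_lt_top.ne)
    hmeas.aestronglyMeasurable ?_
  refine (ae_restrict_iff' measurableSet_Ioo).2 (Filter.Eventually.of_forall fun t ht => ?_)
  rw [Real.norm_eq_abs, abs_of_nonneg (le_min
    (inv_nonneg.2 (by nlinarith [ht.1, hπ] : (0:ℝ) ≤ 2 * π * t)) hMη)]
  exact min_le_right _ _

lemma time_bound {η T M : ℝ} (hη : 0 < η) (hη1 : η < 1) (hT : 0 < T) (hM : 0 ≤ M) :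
    (∫ t in Set.Ioo (0:ℝ) T, min ((2 * π * t)⁻¹) (M * (η ^ 2)⁻¹)) ≤
      M + (2 * π)⁻¹ * max (Real.log T) 0 + π⁻¹ * Real.log η⁻¹ := by
  have hπ := Real.pi_pos
  have hη2 : (0:ℝ) < η ^ 2 := by positivity
  have hLη : 0 < Real.log η⁻¹ := Real.log_pos (by rw [one_lt_inv_iff₀]; exact ⟨hη, hη1⟩)
  have hmax : 0 ≤ max (Real.log T) 0 := le_max_right _ _
  set minf : ℝ → ℝ := fun t => min ((2 * π * t)⁻¹) (M * (η ^ 2)⁻¹) with hminf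
  have hmeas : Measurable minf := ((measurable_id.const_mul (2 * π)).inv).min measurable_const
  have hMη : (0:ℝ) ≤ M * (η ^ 2)⁻¹ := by positivity
  have hconst : ∀ s : Set ℝ, volume s < ⊤ → IntegrableOn (fun _ : ℝ => M * (η ^ 2)⁻¹) s :=
    fun s hs => integrableOn_const hs.ne
  have hIooT : volume (Set.Ioo (0:ℝ) T) < ⊤ := measure_Ioo_lt_top
  have hint : IntegrableOn minf (Set.Ioo 0 T) := minf_integrable hη hT hM
  by_cases hcase : T ≤ η ^ 2
  · have h1 := setIntegral_mono_on hint (hconst _ hIooT) measurableSet_Ioo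
      (fun t ht => min_le_right _ _)
    rw [setIntegral_const, measureReal_def, Real.volume_Ioo, smul_eq_mul] at h1
    have h2 : (ENNReal.ofReal (T - 0)).toReal = T := by
      rw [ENNReal.toReal_ofReal (by linarith)]; ring_nf
    rw [h2] at h1
    have h3 : T * (M * (η ^ 2)⁻¹) ≤ M := by
      have := mul_le_mul_of_nonneg_right hcase hMη
      calc T * (M * (η ^ 2)⁻¹) ≤ η ^ 2 * (M * (η ^ 2)⁻¹) := this
        _ = M := by field_simp
    have h4 : (0:ℝ) ≤ (2 * π)⁻¹ * max (Real.log T) 0 := by positivity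
    have h5 : (0:ℝ) ≤ π⁻¹ * Real.log η⁻¹ := by positivity
    linarith
  · push_neg at hcase
    have hsplit : Set.Ioo (0:ℝ) T = Set.Ioc 0 (η ^ 2) ∪ Set.Ioo (η ^ 2) T := by
      ext x
      simp only [Set.mem_Ioo, Set.mem_Ioc, Set.mem_union]
      constructor
      · rintro ⟨h1, h2⟩
        by_cases hx : x ≤ η ^ 2
        · exact Or.inl ⟨h1, hx⟩
        · exact Or.inr ⟨lt_of_not_ge hx, h2⟩
      · rintro (⟨h1, h2⟩ | ⟨h1, h2⟩)
        · exact ⟨h1, lt_of_le_of_lt h2 hcase⟩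
        · exact ⟨lt_trans hη2 h1, h2⟩
    have hdisj : Disjoint (Set.Ioc (0:ℝ) (η ^ 2)) (Set.Ioo (η ^ 2) T) := by
      rw [Set.disjoint_left]
      rintro x ⟨_, h2⟩ ⟨h3, _⟩
      exact absurd h3 (not_lt.2 h2)
    have hsub1 : Set.Ioc (0:ℝ) (η ^ 2) ⊆ Set.Ioo 0 T := fun x hx =>
      ⟨hx.1, lt_of_le_of_lt hx.2 hcase⟩
    have hsub2 : Set.Ioo (η ^ 2) T ⊆ Set.Ioo (0:ℝ) T := fun x hx =>
      ⟨lt_trans hη2 hx.1, hx.2⟩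
    have hi1 : IntegrableOn minf (Set.Ioc 0 (η ^ 2)) := hint.mono_set hsub1
    have hi2 : IntegrableOn minf (Set.Ioo (η ^ 2) T) := hint.mono_set hsub2
    rw [hsplit, setIntegral_union hdisj measurableSet_Ioo hi1 hi2]
    have hpiece1 : (∫ t in Set.Ioc (0:ℝ) (η ^ 2), minf t) ≤ M := by
      have h1 := setIntegral_mono_on hi1 (hconst _ measure_Ioc_lt_top) measurableSet_Ioc
        (fun t ht => min_le_right _ _)
      rw [setIntegral_const, measureReal_def, Real.volume_Ioc, smul_eq_mul,
        ENNReal.toReal_ofReal (by linarith : (0:ℝ) ≤ η ^ 2 - 0)] at h1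
      calc (∫ t in Set.Ioc (0:ℝ) (η ^ 2), minf t) ≤ (η ^ 2 - 0) * (M * (η ^ 2)⁻¹) := h1
        _ = M := by field_simp; ring
    have hinv : IntegrableOn (fun t : ℝ => (2 * π * t)⁻¹) (Set.Ioo (η ^ 2) T) := by
      have hcont : ContinuousOn (fun t : ℝ => (2 * π * t)⁻¹) (Set.Icc (η ^ 2) T) := by
        refine ContinuousOn.inv₀ ((continuous_const.mul continuous_id).continuousOn) ?_
        intro t ht
        have : 0 < t := lt_of_lt_of_le hη2 ht.1
        positivity
      exact (hcont.integrableOn_Icc).mono_set Set.Ioo_subset_Icc_self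
    have hpiece2 : (∫ t in Set.Ioo (η ^ 2) T, minf t) ≤
        (2 * π)⁻¹ * (max (Real.log T) 0 + 2 * Real.log η⁻¹) := by
      have h1 := setIntegral_mono_on hi2 hinv measurableSet_Ioo
        (fun t ht => min_le_left _ _)
      have h2 : (∫ t in Set.Ioo (η ^ 2) T, (2 * π * t)⁻¹) =
          (2 * π)⁻¹ * Real.log (T / η ^ 2) := by
        have he : ∀ t : ℝ, (2 * π * t)⁻¹ = (2 * π)⁻¹ * t⁻¹ := fun t => by
          rw [mul_inv]
        rw [MeasureTheory.setIntegral_congr_fun measurableSet_Ioo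
          (fun t _ => he t), MeasureTheory.integral_const_mul]
        congr 1
        rw [← MeasureTheory.integral_Ioc_eq_integral_Ioo,
          ← intervalIntegral.integral_of_le hcase.le]
        refine integral_inv ?_
        rw [Set.uIcc_of_le hcase.le]
        intro h
        exact absurd h.1 (not_le.2 hη2)
      have h3 : Real.log (T / η ^ 2) = Real.log T + 2 * Real.log η⁻¹ := by
        rw [Real.log_div hT.ne' hη2.ne', Real.log_pow, Real.log_inv]
        push_cast
        ring
      have h4 : Real.log T ≤ max (Real.log T) 0 := le_max_left _ _
      have h5 : (0:ℝ) < (2 * π)⁻¹ := by positivity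
      calc (∫ t in Set.Ioo (η ^ 2) T, minf t) ≤ ∫ t in Set.Ioo (η ^ 2) T, (2 * π * t)⁻¹ := h1
        _ = (2 * π)⁻¹ * Real.log (T / η ^ 2) := h2
        _ = (2 * π)⁻¹ * (Real.log T + 2 * Real.log η⁻¹) := by rw [h3]
        _ ≤ (2 * π)⁻¹ * (max (Real.log T) 0 + 2 * Real.log η⁻¹) := by nlinarith
    have hfin : (2 * π)⁻¹ * (max (Real.log T) 0 + 2 * Real.log η⁻¹) =
        (2 * π)⁻¹ * max (Real.log T) 0 + π⁻¹ * Real.log η⁻¹ := by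
      field_simp
    linarith
end Stmt14

open Real Stmt14 in
theorem stmt_14 (Φ : EuclideanSpace ℝ (Fin 2) → ℝ) (hΦc : Continuous Φ)
    (hΦ0 : ∀ z, 0 ≤ Φ z) (hΦsupp : ∀ z : EuclideanSpace ℝ (Fin 2), 1 < ‖z‖ → Φ z = 0)
    (hΦ1 : (∫ z, Φ z) = 1)
    (p C₀ T₀ : ℝ) (hp : 0 < p) (hT₀ : 0 < T₀) :
    ∃ C : ℝ, 0 < C ∧ ∀ Ψ : EuclideanSpace ℝ (Fin 2) × ℝ → ℝ,
      (∀ y : EuclideanSpace ℝ (Fin 2), ∀ t ∈ Set.Icc (0:ℝ) T₀,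
        |Ψ (y, t)| ≤ C₀ / (1 + ‖y‖ ^ p)) →
      ∀ T ∈ Set.Ioc (0:ℝ) T₀, ∀ η ∈ Set.Ioo (0:ℝ) (1/2), ∀ x₀ : EuclideanSpace ℝ (Fin 2),
        |(2 * Real.pi / Real.log η⁻¹) *
            ∫ t in Set.Ioo (0:ℝ) T, ∫ y : EuclideanSpace ℝ (Fin 2),
              (∫ z, heatK t (y - z) * ((η ^ 2)⁻¹ * Φ (η⁻¹ • z))) ^ 2 * Ψ (x₀ - y, t)|
          ≤ C / (1 + ‖x₀‖ ^ p) := by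
  classical
  have hπ := Real.pi_pos
  obtain ⟨z₀, hz₀⟩ := hΦc.exists_forall_ge_of_hasCompactSupport
    (HasCompactSupport.intro (isCompact_closedBall (0 : E2) 1)
      (fun z hz => hΦsupp z (by
        simpa [Metric.mem_closedBall, dist_zero_right, not_le] using hz)))
  set M : ℝ := Φ z₀ with hMdef
  have hM0 : 0 ≤ M := hΦ0 z₀
  set B : ℝ := max C₀ 0 with hBdef
  have hB0 : 0 ≤ B := le_max_right _ _
  set K : ℝ := 1 + Real.exp (4 * T₀ * p ^ 2) with hKdef
  have hK0 : (0:ℝ) ≤ K := by rw [hKdef]; positivity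
  have h2p : (0:ℝ) < 2 ^ p := Real.rpow_pos_of_pos (by norm_num) p
  set Cin : ℝ := B * 2 ^ p * ((1 + 2 ^ p) + 8 * K) with hCindef
  have hCin0 : 0 ≤ Cin := by
    have : (0:ℝ) ≤ (1 + 2 ^ p) + 8 * K := by nlinarith
    exact mul_nonneg (mul_nonneg hB0 h2p.le) this
  set mx₀ : ℝ := max (Real.log T₀) 0 with hmxdef
  have hmx0 : 0 ≤ mx₀ := le_max_right _ _
  have hlog2 : (0:ℝ) < Real.log 2 := Real.log_pos (by norm_num)
  set C₂ : ℝ := (2 * Real.pi * M + mx₀) / Real.log 2 + 2 with hC2def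
  have hC20 : 0 ≤ C₂ := by
    rw [hC2def]
    have h1 : (0:ℝ) ≤ 2 * Real.pi * M + mx₀ := by positivity
    have := div_nonneg h1 hlog2.le
    linarith
  refine ⟨max (Cin * C₂) 1, lt_of_lt_of_le one_pos (le_max_right _ _), ?_⟩
  intro Ψ hΨ T hT η hη x₀
  have hη0 : 0 < η := hη.1
  have hη1 : η < 1 := lt_trans hη.2 (by norm_num)
  have h2η : (2:ℝ) ≤ η⁻¹ := by
    have := inv_anti₀ hη0 hη.2.le
    simpa using this
  set L : ℝ := Real.log η⁻¹ with hLdef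
  have hL : Real.log 2 ≤ L := Real.log_le_log (by norm_num) h2η
  have hL0 : 0 < L := lt_of_lt_of_le hlog2 hL
  have hRp : (0:ℝ) ≤ ‖x₀‖ ^ p := Real.rpow_nonneg (norm_nonneg x₀) p
  have hden : (0:ℝ) < 1 + ‖x₀‖ ^ p := by linarith
  set g : E2 → ℝ := fun z => (η ^ 2)⁻¹ * Φ (η⁻¹ • z) with hgdef
  have hg : Integrable g := phieta_integrable Φ hΦc hΦsupp hη0
  have hg0 : ∀ z, 0 ≤ g z := fun z => mul_nonneg (by positivity) (hΦ0 _)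
  have hgsupp : ∀ z : E2, 1 < ‖z‖ → g z = 0 := fun z hz =>
    phieta_supp Φ hΦsupp hη0 z (lt_trans (by linarith [hη.2]) hz)
  have hgint : (∫ z, g z) = 1 := phieta_integral Φ hΦ1 hη0
  have hgA : ∀ z, g z ≤ M * (η ^ 2)⁻¹ := fun z => phieta_bound Φ M hz₀ hη0 z
  have hinner : ∀ t ∈ Set.Ioo (0:ℝ) T,
      |∫ y : E2, (∫ z, heatK t (y - z) * g z) ^ 2 * Ψ (x₀ - y, t)| ≤
        Cin / (1 + ‖x₀‖ ^ p) * min ((2 * Real.pi * t)⁻¹) (M * (η ^ 2)⁻¹) := by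
    intro t ht
    have htT₀ : t ≤ T₀ := le_trans ht.2.le hT.2
    have hΨt : ∀ y : E2, |Ψ (y, t)| ≤ B / (1 + ‖y‖ ^ p) := by
      intro y
      have hd : (0:ℝ) < 1 + ‖y‖ ^ p := by
        have := Real.rpow_nonneg (norm_nonneg y) p; linarith
      refine le_trans (hΨ y t ⟨ht.1.le, htT₀⟩) ?_
      gcongr
      exact le_max_left _ _
    have h := inner_bound hp hB0 hT₀ ht.1 htT₀ hg hg0 hgsupp hgint hgA Ψ hΨt x₀
    refine le_trans h (le_of_eq ?_)
    rw [hCindef, hKdef]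
    ring
  -- outer integral estimate
  have hminf := minf_integrable (M := M) (T := T) hη0 hT.1 hM0
  have hD : IntegrableOn
      (fun t : ℝ => Cin / (1 + ‖x₀‖ ^ p) * min ((2 * Real.pi * t)⁻¹) (M * (η ^ 2)⁻¹))
      (Set.Ioo 0 T) := hminf.const_mul _
  have habs : |∫ t in Set.Ioo (0:ℝ) T,
        ∫ y : E2, (∫ z, heatK t (y - z) * g z) ^ 2 * Ψ (x₀ - y, t)| ≤
      ∫ t in Set.Ioo (0:ℝ) T,
        |∫ y : E2, (∫ z, heatK t (y - z) * g z) ^ 2 * Ψ (x₀ - y, t)| := by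
    simpa using norm_integral_le_integral_norm (μ := volume.restrict (Set.Ioo (0:ℝ) T))
      (fun t => ∫ y : E2, (∫ z, heatK t (y - z) * g z) ^ 2 * Ψ (x₀ - y, t))
  have hmono := integral_mono_of_nonneg
    (f := fun t => |∫ y : E2, (∫ z, heatK t (y - z) * g z) ^ 2 * Ψ (x₀ - y, t)|)
    (g := fun t : ℝ => Cin / (1 + ‖x₀‖ ^ p) * min ((2 * Real.pi * t)⁻¹) (M * (η ^ 2)⁻¹))
    (μ := volume.restrict (Set.Ioo (0:ℝ) T))
    (Filter.Eventually.of_forall fun t => abs_nonneg _) hD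
    ((ae_restrict_iff' measurableSet_Ioo).2 (Filter.Eventually.of_forall hinner))
  have hS := time_bound (M := M) (T := T) hη0 hη1 hT.1 hM0
  have hq : (0:ℝ) ≤ Cin / (1 + ‖x₀‖ ^ p) := div_nonneg hCin0 hden.le
  have hmxT : max (Real.log T) 0 ≤ mx₀ := by
    rw [hmxdef]
    exact max_le_max (Real.log_le_log hT.1 hT.2) le_rfl
  have hItot : |∫ t in Set.Ioo (0:ℝ) T,
        ∫ y : E2, (∫ z, heatK t (y - z) * g z) ^ 2 * Ψ (x₀ - y, t)| ≤
      Cin / (1 + ‖x₀‖ ^ p) * (M + (2 * Real.pi)⁻¹ * mx₀ + Real.pi⁻¹ * L) := by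
    have h1 : (∫ t in Set.Ioo (0:ℝ) T,
        Cin / (1 + ‖x₀‖ ^ p) * min ((2 * Real.pi * t)⁻¹) (M * (η ^ 2)⁻¹)) =
        Cin / (1 + ‖x₀‖ ^ p) *
          ∫ t in Set.Ioo (0:ℝ) T, min ((2 * Real.pi * t)⁻¹) (M * (η ^ 2)⁻¹) :=
      MeasureTheory.integral_const_mul _ _
    have h2 : (∫ t in Set.Ioo (0:ℝ) T, min ((2 * Real.pi * t)⁻¹) (M * (η ^ 2)⁻¹)) ≤
        M + (2 * Real.pi)⁻¹ * mx₀ + Real.pi⁻¹ * L := by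
      refine le_trans hS ?_
      have : (0:ℝ) ≤ (2 * Real.pi)⁻¹ := by positivity
      nlinarith [hmxT]
    calc |∫ t in Set.Ioo (0:ℝ) T,
          ∫ y : E2, (∫ z, heatK t (y - z) * g z) ^ 2 * Ψ (x₀ - y, t)|
        ≤ ∫ t in Set.Ioo (0:ℝ) T,
            |∫ y : E2, (∫ z, heatK t (y - z) * g z) ^ 2 * Ψ (x₀ - y, t)| := habs
      _ ≤ ∫ t in Set.Ioo (0:ℝ) T,
            Cin / (1 + ‖x₀‖ ^ p) * min ((2 * Real.pi * t)⁻¹) (M * (η ^ 2)⁻¹) := hmono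
      _ = Cin / (1 + ‖x₀‖ ^ p) *
            ∫ t in Set.Ioo (0:ℝ) T, min ((2 * Real.pi * t)⁻¹) (M * (η ^ 2)⁻¹) := h1
      _ ≤ Cin / (1 + ‖x₀‖ ^ p) * (M + (2 * Real.pi)⁻¹ * mx₀ + Real.pi⁻¹ * L) :=
          mul_le_mul_of_nonneg_left h2 hq
  have hpre : 0 < 2 * Real.pi / L := by positivity
  have hC2b : 2 * Real.pi / L * (M + (2 * Real.pi)⁻¹ * mx₀ + Real.pi⁻¹ * L) ≤ C₂ := by
    have heq : 2 * Real.pi / L * (M + (2 * Real.pi)⁻¹ * mx₀ + Real.pi⁻¹ * L) =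
        (2 * Real.pi * M + mx₀) / L + 2 := by
      field_simp
    rw [heq, hC2def]
    have h1 : (2 * Real.pi * M + mx₀) / L ≤ (2 * Real.pi * M + mx₀) / Real.log 2 :=
      div_le_div_of_nonneg_left (by positivity) hlog2 hL
    linarith
  calc |2 * Real.pi / Real.log η⁻¹ *
        ∫ t in Set.Ioo (0:ℝ) T,
          ∫ y : E2, (∫ z, heatK t (y - z) * g z) ^ 2 * Ψ (x₀ - y, t)|
      = 2 * Real.pi / L * |∫ t in Set.Ioo (0:ℝ) T,
          ∫ y : E2, (∫ z, heatK t (y - z) * g z) ^ 2 * Ψ (x₀ - y, t)| := by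
        rw [abs_mul, abs_of_pos hpre]
    _ ≤ 2 * Real.pi / L *
        (Cin / (1 + ‖x₀‖ ^ p) * (M + (2 * Real.pi)⁻¹ * mx₀ + Real.pi⁻¹ * L)) :=
        mul_le_mul_of_nonneg_left hItot hpre.le
    _ = Cin / (1 + ‖x₀‖ ^ p) *
        (2 * Real.pi / L * (M + (2 * Real.pi)⁻¹ * mx₀ + Real.pi⁻¹ * L)) := by ring
    _ ≤ Cin / (1 + ‖x₀‖ ^ p) * C₂ := mul_le_mul_of_nonneg_left hC2b hq
    _ = Cin * C₂ / (1 + ‖x₀‖ ^ p) := by ring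
    _ ≤ max (Cin * C₂) 1 / (1 + ‖x₀‖ ^ p) := by
        gcongr
        exact le_max_left _ _
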